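/- Let h : ℝ^d → ℝ^d satisfy ⟨θ, h(θ)⟩ ≥ ā|θ|² - b̄' for all θ (with ā, b̄' > 0). Define the Lyapunov function V_p(θ) := (1 + |θ|²)^{p/2}. Then for every integer p ≥ 2 and all θ ∈ ℝ^d, β^{-1} Δ V_p(θ) - ⟨∇V_p(θ), h(θ)⟩ ≤ -(āp/2) V_p(θ) + (āp/2)(1 + M_V(p)²)^{p/2}, where M_V(p) := (1 + (2b̄' + 2β^{-1}(d + p - 2))/ā)^{1/2} and β > 0. -/
import Mathlib


open scoped RealInnerProductSpace

set_option maxHeartbeats 1600000 in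
theorem lyapunov_drift_condition
    (d : ℕ) (hd : 1 ≤ d) (β abar bbar' : ℝ)
    (hβ : 0 < β) (habar : 0 < abar) (hbbar' : 0 < bbar')
    (h : EuclideanSpace ℝ (Fin d) → EuclideanSpace ℝ (Fin d))
    (hdiss : ∀ θ : EuclideanSpace ℝ (Fin d), ⟪θ, h θ⟫ ≥ abar * ‖θ‖ ^ 2 - bbar')
    (p : ℕ) (hp : 2 ≤ p) :
    ∀ θ : EuclideanSpace ℝ (Fin d),
      β⁻¹ * ((p : ℝ) * ((p : ℝ) - 2) * (1 + ‖θ‖ ^ 2) ^ ((p : ℝ) / 2 - 2) * ‖θ‖ ^ 2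
            + (d : ℝ) * (p : ℝ) * (1 + ‖θ‖ ^ 2) ^ (((p : ℝ) - 2) / 2))
          - ⟪((p : ℝ) * (1 + ‖θ‖ ^ 2) ^ (((p : ℝ) - 2) / 2)) • θ, h θ⟫
        ≤ -(abar * (p : ℝ) / 2) * (1 + ‖θ‖ ^ 2) ^ ((p : ℝ) / 2)
          + (abar * (p : ℝ) / 2)
              * (1 + (1 + (2 * bbar' + 2 * β⁻¹ * ((d : ℝ) + (p : ℝ) - 2)) / abar))
                  ^ ((p : ℝ) / 2) := by
  intro θ
  have hp2 : (2:ℝ) ≤ (p:ℝ) := by exact_mod_cast hp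
  have hd1 : (1:ℝ) ≤ (d:ℝ) := by exact_mod_cast hd
  have hβi : 0 < β⁻¹ := by positivity
  set r : ℝ := ‖θ‖ ^ 2 with hr
  have hr0 : 0 ≤ r := by positivity
  have hs0 : (0:ℝ) < 1 + r := by linarith
  set K : ℝ := bbar' + β⁻¹ * ((d:ℝ) + (p:ℝ) - 2) with hK
  have hK0 : 0 < K := by
    have h1 : (0:ℝ) < (d:ℝ) + (p:ℝ) - 2 := by linarith
    have := mul_pos hβi h1
    rw [hK]; linarith
  set c : ℝ := 1 + (1 + (2 * bbar' + 2 * β⁻¹ * ((d:ℝ) + (p:ℝ) - 2)) / abar) with hcdef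
  have hc : c = 2 + 2 * K / abar := by rw [hcdef, hK]; field_simp; ring
  have hc0 : 0 < c := by rw [hc]; positivity
  set A : ℝ := (1 + r) ^ (((p:ℝ) - 2) / 2) with hA
  set B : ℝ := (1 + r) ^ ((p:ℝ) / 2 - 2) with hB
  have hAB : A = B * (1 + r) := by
    rw [hA, hB, show ((p:ℝ) - 2) / 2 = ((p:ℝ) / 2 - 2) + 1 by ring,
      Real.rpow_add hs0, Real.rpow_one]
  have hA0 : 0 < A := Real.rpow_pos_of_pos hs0 _
  have hB0 : 0 < B := Real.rpow_pos_of_pos hs0 _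
  have hfull : (1 + r) ^ ((p:ℝ) / 2) = A * (1 + r) := by
    rw [hA, show (p:ℝ) / 2 = (((p:ℝ) - 2) / 2) + 1 by ring,
      Real.rpow_add hs0, Real.rpow_one]
  set C : ℝ := c ^ (((p:ℝ) - 2) / 2) with hC
  have hC0 : 0 < C := Real.rpow_pos_of_pos hc0 _
  have hcfull : c ^ ((p:ℝ) / 2) = C * c := by
    rw [hC, show (p:ℝ) / 2 = (((p:ℝ) - 2) / 2) + 1 by ring,
      Real.rpow_add hc0, Real.rpow_one]
  rw [real_inner_smul_left, hfull, hcfull]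
  set I : ℝ := ⟪θ, h θ⟫ with hI
  have hih : I ≥ abar * r - bbar' := hdiss θ
  have hmono : 1 + r ≤ c → A ≤ C := fun hcase => by
    rw [hA, hC]
    exact Real.rpow_le_rpow hs0.le hcase (by linarith)
  have hca : abar * c = 2 * abar + 2 * K := by
    rw [hc]; field_simp
  clear_value I
  clear_value r K c A B C
  clear hdiss hI hr hA hB hC hcdef hfull hcfull h θ
  -- Step 1: bound by p * A * (K - abar * r)
  have h1 : β⁻¹ * ((p:ℝ) * ((p:ℝ) - 2) * B * r + (d:ℝ) * (p:ℝ) * A)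
      - ((p:ℝ) * A) * I ≤ (p:ℝ) * A * (K - abar * r) := by
    have hBr : B * r ≤ A := by
      rw [hAB]; nlinarith [hB0]
    have hpa : 0 ≤ (p:ℝ) * A := by positivity
    have hinner : -(((p:ℝ) * A) * I) ≤ ((p:ℝ) * A) * (bbar' - abar * r) := by
      have := mul_le_mul_of_nonneg_left hih hpa
      nlinarith [this]
    have hcoef : 0 ≤ β⁻¹ * ((p:ℝ) * ((p:ℝ) - 2)) := by
      have : (0:ℝ) ≤ (p:ℝ) * ((p:ℝ) - 2) := by nlinarith
      positivity
    have hBr2 := mul_le_mul_of_nonneg_left hBr hcoef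
    rw [hK]
    nlinarith [hBr2, hinner]
  -- Step 2: drift bound
  have h2 : (p:ℝ) * A * (K - abar * r)
      ≤ -(abar * (p:ℝ) / 2) * (A * (1 + r)) + abar * (p:ℝ) / 2 * (C * c) := by
    by_cases hcase : 1 + r ≤ c
    · have hAC : A ≤ C := hmono hcase
      have key : A * (K + abar / 2 - abar * r / 2) ≤ C * (K + abar) := by
        rcases le_or_gt 0 (K + abar / 2 - abar * r / 2) with hf | hf
        · have := mul_le_mul hAC (by nlinarith [mul_nonneg habar.le hr0] : K + abar / 2 - abar * r / 2 ≤ K + abar)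
            hf hC0.le
          linarith
        · have hL : A * (K + abar / 2 - abar * r / 2) ≤ 0 :=
            mul_nonpos_of_nonneg_of_nonpos hA0.le hf.le
          have hR : (0:ℝ) ≤ C * (K + abar) := mul_nonneg hC0.le (by linarith)
          linarith
      have hrhs : abar * (p:ℝ) / 2 * (C * c) = (p:ℝ) * (C * (K + abar)) := by
        have : abar * (p:ℝ) / 2 * (C * c) = (p:ℝ) * C * (abar * c) / 2 := by ring
        rw [this, hca]; ring
      rw [hrhs]
      have := mul_le_mul_of_nonneg_left key (by positivity : (0:ℝ) ≤ (p:ℝ))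
      nlinarith [this]
    · push_neg at hcase
      have hrc : 2 + 2 * K / abar < 1 + r := by rw [← hc]; exact hcase
      have hf : K + abar / 2 - abar * r / 2 ≤ 0 := by
        have h2' : abar * (2 + 2 * K / abar) < abar * (1 + r) := by
          rw [← hc]; exact (mul_lt_mul_iff_right₀ habar).mpr hcase
        rw [mul_add] at h2'
        rw [show abar * (2 * K / abar) = 2 * K * (abar * abar⁻¹) by ring,
          mul_inv_cancel₀ habar.ne'] at h2'
        nlinarith
      have hCc : 0 ≤ abar * (p:ℝ) / 2 * (C * c) := by positivity
      have hneg : 0 ≤ ((p:ℝ) * A) * (-(K + abar / 2 - abar * r / 2)) :=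
        mul_nonneg (by positivity) (neg_nonneg.mpr hf)
      nlinarith [hneg, hCc]
  linarith
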